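/- Let S₁ and S₂ be signed graphs with adjacency matrices A₁ (n₁×n₁) and A₂ (n₂×n₂), and let A be the adjacency matrix of the s-neighbourhood corona S₁ ⋆ₛ S₂. For every real number t such that tI_{n₂} − A₂ is invertible, det(tI_{n₁(n₂+1)} − A) = det(tI_{n₂} − A₂)^{n₁} · det(tI_{n₁} − A₁ − χ_{A₂}(t)·A₁²), where χ_{A₂}(t) = j_{n₂}ᵀ(tI_{n₂} − A₂)⁻¹j_{n₂} is the coronal of A₂ at t. -/

import Mathlib

open Matrix BigOperators Kronecker

/-- A signed graph on vertex set `V` is represented by its adjacency matrix: a real symmetric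
matrix with zero diagonal and all entries in `{-1, 0, 1}`. -/
def IsSignedAdj {V : Type*} (A : Matrix V V ℝ) : Prop :=
  A.IsHermitian ∧ (∀ i, A i i = 0) ∧ ∀ i j, A i j = -1 ∨ A i j = 0 ∨ A i j = 1

/-- The coronal of a matrix `B` at `t`: `jᵀ (tI − B)⁻¹ j`, where `j` is the all-ones vector. -/
noncomputable def coronal {V : Type*} [Fintype V] [DecidableEq V]
    (B : Matrix V V ℝ) (t : ℝ) : ℝ :=
  dotProduct (fun _ => 1) (((t • (1 : Matrix V V ℝ) - B)⁻¹).mulVec fun _ => 1)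

/-- The adjacency matrix of the s-neighbourhood corona `S₁ ⋆ₛ S₂`:
the block matrix `[[A₁, jᵀ ⊗ A₁], [(jᵀ ⊗ A₁)ᵀ, A₂ ⊗ I]]`, indexed by `Fin n₁ ⊕ (V × Fin n₁)`. -/
def coronaAdj {n₁ : ℕ} {V : Type*} [DecidableEq V]
    (A₁ : Matrix (Fin n₁) (Fin n₁) ℝ) (A₂ : Matrix V V ℝ) :
    Matrix (Fin n₁ ⊕ V × Fin n₁) (Fin n₁ ⊕ V × Fin n₁) ℝ :=
  Matrix.fromBlocks A₁ (Matrix.of fun i p => A₁ i p.2) (Matrix.of fun p j => A₁ p.2 j)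
    (A₂ ⊗ₖ (1 : Matrix (Fin n₁) (Fin n₁) ℝ))

/-- For signed graphs `S₁, S₂` and any real `t` with `tI − A₂` invertible,
`det(tI − A) = det(tI − A₂)^{n₁} · det(tI − A₁ − χ_{A₂}(t) A₁²)`, where `A` is the adjacency
matrix of `S₁ ⋆ₛ S₂` and `χ_{A₂}` is the coronal of `A₂`. -/
theorem fromBlocks_sub' {l m n o α : Type*} [Sub α] (A : Matrix n l α) (B : Matrix n m α)
    (C : Matrix o l α) (D : Matrix o m α) (A' : Matrix n l α) (B' : Matrix n m α)
    (C' : Matrix o l α) (D' : Matrix o m α) :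
    Matrix.fromBlocks A B C D - Matrix.fromBlocks A' B' C' D' =
      Matrix.fromBlocks (A - A') (B - B') (C - C') (D - D') := by
  ext (i | i) (j | j) <;> rfl

theorem det_corona_adj {n₁ n₂ : ℕ}
    (A₁ : Matrix (Fin n₁) (Fin n₁) ℝ) (A₂ : Matrix (Fin n₂) (Fin n₂) ℝ)
    (h₁ : IsSignedAdj A₁) (h₂ : IsSignedAdj A₂) (t : ℝ)
    (hinv : IsUnit (t • (1 : Matrix (Fin n₂) (Fin n₂) ℝ) - A₂).det) :
    (t • (1 : Matrix (Fin n₁ ⊕ Fin n₂ × Fin n₁) (Fin n₁ ⊕ Fin n₂ × Fin n₁) ℝ)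
        - coronaAdj A₁ A₂).det
      = (t • (1 : Matrix (Fin n₂) (Fin n₂) ℝ) - A₂).det ^ n₁ *
        (t • (1 : Matrix (Fin n₁) (Fin n₁) ℝ) - A₁ - coronal A₂ t • (A₁ * A₁)).det := by
  classical
  set T := t • (1 : Matrix (Fin n₂) (Fin n₂) ℝ) - A₂ with hT
  have hkron : t • (1 : Matrix (Fin n₂ × Fin n₁) (Fin n₂ × Fin n₁) ℝ)
      - A₂ ⊗ₖ (1 : Matrix (Fin n₁) (Fin n₁) ℝ) = T ⊗ₖ 1 := by
    rw [hT]
    ext ⟨k, p⟩ ⟨l, q⟩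
    simp only [Matrix.sub_apply, Matrix.smul_apply, Matrix.one_apply, Matrix.kroneckerMap_apply,
      Matrix.sub_apply, Matrix.smul_apply, Prod.mk.injEq, smul_eq_mul, sub_mul]
    split_ifs with h1 h2 h3 <;> simp_all <;> ring
  have hsplit : t • (1 : Matrix (Fin n₁ ⊕ Fin n₂ × Fin n₁) (Fin n₁ ⊕ Fin n₂ × Fin n₁) ℝ)
      - coronaAdj A₁ A₂ =
      Matrix.fromBlocks (t • 1 - A₁) (-(Matrix.of fun i p => A₁ i p.2))
        (-(Matrix.of fun p j => A₁ p.2 j)) (T ⊗ₖ 1) := by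
    rw [coronaAdj, ← Matrix.fromBlocks_one, Matrix.fromBlocks_smul, fromBlocks_sub', ← hkron]
    congr 1 <;> simp
  rw [hsplit]
  have hTdet : IsUnit (T ⊗ₖ (1 : Matrix (Fin n₁) (Fin n₁) ℝ)).det := by
    rw [Matrix.det_kronecker]
    simpa using hinv.pow n₁
  haveI : Invertible T := ((Matrix.isUnit_iff_isUnit_det T).mpr hinv).invertible
  haveI : Invertible (T ⊗ₖ (1 : Matrix (Fin n₁) (Fin n₁) ℝ)) :=
    ((Matrix.isUnit_iff_isUnit_det _).mpr hTdet).invertible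
  rw [Matrix.det_fromBlocks₂₂, Matrix.invOf_eq_nonsing_inv, Matrix.inv_kronecker,
    inv_one, Matrix.det_kronecker]
  simp only [Matrix.det_one, one_pow, mul_one, Fintype.card_fin]
  congr 1
  have key : (-(Matrix.of fun (i : Fin n₁) (p : Fin n₂ × Fin n₁) => A₁ i p.2)) *
      (T⁻¹ ⊗ₖ (1 : Matrix (Fin n₁) (Fin n₁) ℝ)) *
      (-(Matrix.of fun (p : Fin n₂ × Fin n₁) (j : Fin n₁) => A₁ p.2 j)) =
      coronal A₂ t • (A₁ * A₁) := by
    simp only [Matrix.neg_mul, Matrix.mul_neg, neg_neg]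
    ext i j
    simp only [Matrix.mul_apply, Matrix.kroneckerMap_apply, Matrix.of_apply,
      Fintype.sum_prod_type, Matrix.one_apply, mul_ite, mul_one, mul_zero,
      Finset.sum_ite_eq, Finset.mem_univ, if_true, Matrix.smul_apply, smul_eq_mul,
      coronal, dotProduct, Matrix.mulVec, one_mul, ← hT]
    simp only [Finset.sum_ite_eq', Finset.mem_univ, if_true, Finset.sum_mul, Finset.mul_sum]
    have h1 : ∀ x : Fin n₂,
        (∑ p : Fin n₁, ∑ k : Fin n₂, A₁ i p * T⁻¹ k x * A₁ p j)
          = ∑ k : Fin n₂, ∑ p : Fin n₁, A₁ i p * T⁻¹ k x * A₁ p j :=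
      fun x => Finset.sum_comm
    simp only [h1]
    rw [Finset.sum_comm]
    conv_rhs => rw [Finset.sum_comm]
    have h2 : ∀ x : Fin n₂,
        (∑ q : Fin n₁, ∑ l : Fin n₂, T⁻¹ x l * (A₁ i q * A₁ q j))
          = ∑ l : Fin n₂, ∑ q : Fin n₁, T⁻¹ x l * (A₁ i q * A₁ q j) :=
      fun x => Finset.sum_comm
    simp only [h2]
    exact Finset.sum_congr rfl fun _ _ => Finset.sum_congr rfl fun _ _ =>
      Finset.sum_congr rfl fun _ _ => by ring
  rw [key]
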